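/- For every infinite index set κ there exists a Boolean automorphism φ of the measure algebra M_κ which is measure-preserving, i.e. λ_κ(φ(A)) = λ_κ(A) for every A ∈ M_κ, and such that for all A, B ∈ M_κ with A ≠ ⊥ and B ≠ ⊥ there exists n ∈ ω with φ^n(A) ⊓ B ≠ ⊥. -/

import Mathlib

open MeasureTheory Set Filter Topology
open scoped symmDiff ENNReal

noncomputable section

universe u v

/-- The two-element set `{0,1}`, as an additive group (addition mod 2) with the
discrete topology. -/
inductive Two : Type
  | zero
  | one
  deriving DecidableEq

instance instFintypeTwo : Fintype Two :=
  ⟨{Two.zero, Two.one}, fun x => by cases x <;> simp⟩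

instance : Zero Two := ⟨Two.zero⟩
instance : One Two := ⟨Two.one⟩

/-- Addition modulo 2 on `{0,1}`. -/
def Two.add : Two → Two → Two
  | Two.zero, x => x
  | Two.one, Two.zero => Two.one
  | Two.one, Two.one => Two.zero

instance : Add Two := ⟨Two.add⟩
instance : Neg Two := ⟨fun x => x⟩

instance : AddCommGroup Two where
  add := (· + ·)
  zero := Two.zero
  neg := (- ·)
  add_assoc := by decide
  zero_add := by decide
  add_zero := by decide
  neg_add_cancel := by decide
  add_comm := by decide
  nsmul := nsmulRec
  zsmul := zsmulRec

instance : TopologicalSpace Two := ⊥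
instance : DiscreteTopology Two := ⟨rfl⟩

instance : IsTopologicalAddGroup Two where
  continuous_add := continuous_of_discreteTopology
  continuous_neg := continuous_of_discreteTopology

/-- The Cantor cube `{0,1}^κ`, with the product topology. -/
abbrev Cube (κ : Type u) : Type u := κ → Two

instance (κ : Type u) : MeasurableSpace (Cube κ) := borel _

instance (κ : Type u) : BorelSpace (Cube κ) := ⟨rfl⟩

/-- The fair-coin product measure `λ_κ` on `{0,1}^κ`: the Haar measure of the compact
group `{0,1}^κ`, normalized so that the whole space has measure `1`. -/
def lam (κ : Type u) : Measure (Cube κ) :=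
  Measure.addHaarMeasure ⟨⟨Set.univ, isCompact_univ⟩, by simpa using Set.univ_nonempty⟩

/-- The Boolean algebra of measurable subsets of `X`. -/
abbrev MSet (X : Type u) [MeasurableSpace X] : Type u := {s : Set X // MeasurableSet s}

/-- The ideal of `μ`-null sets in the Boolean ring of measurable subsets of `X`. -/
def nullIdeal {X : Type u} [MeasurableSpace X] (μ : Measure X) :
    Ideal (AsBoolRing (MSet X)) where
  carrier := {s | μ (ofBoolRing s : MSet X).1 = 0}
  zero_mem' := by
    show μ (ofBoolRing (0 : AsBoolRing (MSet X)) : MSet X).1 = 0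
    rw [ofBoolRing_zero]
    simpa using measure_empty (μ := μ)
  add_mem' := by
    intro a b ha hb
    show μ (ofBoolRing (a + b) : MSet X).1 = 0
    rw [ofBoolRing_add]
    refine le_antisymm ?_ (by simp)
    calc μ ((ofBoolRing a ∆ ofBoolRing b : MSet X) : Set X)
        ≤ μ (((ofBoolRing a : MSet X) : Set X) ∪ ((ofBoolRing b : MSet X) : Set X)) := by
          refine measure_mono ?_
          simp only [symmDiff_def, MeasurableSet.sup_eq_union, MeasurableSet.coe_union,
            MeasurableSet.coe_sdiff]
          exact Set.union_subset_union Set.diff_subset Set.diff_subset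
      _ ≤ μ ((ofBoolRing a : MSet X) : Set X) + μ ((ofBoolRing b : MSet X) : Set X) :=
          measure_union_le _ _
      _ = 0 := by rw [ha, hb, add_zero]
  smul_mem' := by
    intro c x hx
    show μ (ofBoolRing (c * x) : MSet X).1 = 0
    rw [ofBoolRing_mul]
    refine le_antisymm ?_ (by simp)
    calc μ ((ofBoolRing c ⊓ ofBoolRing x : MSet X) : Set X)
        ≤ μ ((ofBoolRing x : MSet X) : Set X) := by
          refine measure_mono ?_
          simp only [MeasurableSet.inf_eq_inter, MeasurableSet.coe_inter]
          exact Set.inter_subset_right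
      _ = 0 := hx

instance {X : Type u} [MeasurableSpace X] (μ : Measure X) :
    BooleanRing (AsBoolRing (MSet X) ⧸ nullIdeal μ) where
  isIdempotentElem a := by
    obtain ⟨x, rfl⟩ := Ideal.Quotient.mk_surjective a
    show _ * _ = _
    rw [← map_mul]
    exact congrArg _ (BooleanRing.mul_self x)

/-- The measure algebra of the measure `μ`: measurable sets modulo `μ`-null sets,
as a Boolean algebra.  For `μ = lam κ` this is the measure algebra `M_κ`. -/
abbrev MAlg (X : Type u) [MeasurableSpace X] (μ : Measure X) : Type u :=
  AsBoolAlg (AsBoolRing (MSet X) ⧸ nullIdeal μ)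

/-- The class of a measurable set in the measure algebra. -/
def MAlg.mk {X : Type u} [MeasurableSpace X] (μ : Measure X) (s : MSet X) : MAlg X μ :=
  toBoolAlg (Ideal.Quotient.mk (nullIdeal μ) (toBoolRing s))

/-- The measure induced by `μ` on its measure algebra `MAlg X μ` (with real values). -/
def mval {X : Type u} [MeasurableSpace X] (μ : Measure X) (a : MAlg X μ) : ℝ :=
  Quotient.liftOn' (ofBoolAlg a) (fun s => (μ (ofBoolRing s : MSet X).1).toReal)
    (by
      intro s t h
      have hst : s - t ∈ nullIdeal μ := by
        rwa [Submodule.quotientRel_def] at h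
      have h0 : μ (((ofBoolRing s : MSet X) : Set X) ∆ ((ofBoolRing t : MSet X) : Set X)) = 0 := by
        have hn : μ ((ofBoolRing (s - t) : MSet X) : Set X) = 0 := hst
        rw [ofBoolRing_sub] at hn
        simpa only [symmDiff_def, MeasurableSet.sup_eq_union, MeasurableSet.coe_union,
          MeasurableSet.coe_sdiff, Set.sup_eq_union] using hn
      have hc := measure_congr (μ := μ) (MeasureTheory.measure_symmDiff_eq_zero_iff.mp h0)
      simp only [hc])
section Stage1
variable (κ : Type u)

instance : T2Space (Cube κ) := inferInstance
instance : CompactSpace (Cube κ) := inferInstance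
instance : IsTopologicalAddGroup (Cube κ) := inferInstance
instance : LocallyCompactSpace (Cube κ) := inferInstance

instance : Measure.IsAddHaarMeasure (lam κ) := by
  unfold lam; infer_instance

instance : IsProbabilityMeasure (lam κ) := by
  constructor
  have := Measure.addHaarMeasure_self (K₀ := (⟨⟨Set.univ, isCompact_univ⟩, by simpa using Set.univ_nonempty⟩ : TopologicalSpace.PositiveCompacts (Cube κ)))
  simpa [lam] using this

instance : (lam κ).Regular := inferInstance

/-- The homeomorphism of the cube induced by a permutation of coordinates. -/
def cubeMap (σ : κ ≃ κ) : Cube κ ≃ₜ Cube κ where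
  toFun x := x ∘ σ
  invFun x := x ∘ σ.symm
  left_inv x := by funext i; simp
  right_inv x := by funext i; simp
  continuous_toFun := continuous_pi fun i => continuous_apply (σ i)
  continuous_invFun := continuous_pi fun i => continuous_apply (σ.symm i)

lemma cubeMap_measurePreserving (σ : κ ≃ κ) :
    MeasurePreserving (cubeMap κ σ) (lam κ) (lam κ) := by
  have hmeas : Measurable (cubeMap κ σ) := (cubeMap κ σ).continuous.measurable
  refine ⟨hmeas, ?_⟩
  have hadd : ∀ x y : Cube κ, (cubeMap κ σ) (x + y) = cubeMap κ σ x + cubeMap κ σ y := by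
    intro x y; rfl
  let f : Cube κ ≃+ Cube κ := { (cubeMap κ σ).toEquiv with map_add' := hadd }
  have h1 : Measure.IsAddHaarMeasure ((lam κ).map f) :=
    f.isAddHaarMeasure_map (lam κ) (cubeMap κ σ).continuous (cubeMap κ σ).symm.continuous
  have h2 : IsProbabilityMeasure ((lam κ).map f) :=
    Measure.isProbabilityMeasure_map hmeas.aemeasurable
  exact Measure.isAddHaarMeasure_eq_of_isProbabilityMeasure ((lam κ).map f) (lam κ)

end Stage1
section Stage2
variable {κ : Type u}

local instance : DecidableEq κ := Classical.decEq κ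

/-- `C` depends only on the coordinates in `F`. -/
def DOn (C : Set (Cube κ)) (F : Finset κ) : Prop :=
  ∀ ⦃x y : Cube κ⦄, (∀ i ∈ F, x i = y i) → (x ∈ C ↔ y ∈ C)

lemma DOn.mono {C : Set (Cube κ)} {F G : Finset κ} (h : DOn C F) (hFG : F ⊆ G) :
    DOn C G := fun x y hxy => h (fun i hi => hxy i (hFG hi))

lemma DOn.inter {C D : Set (Cube κ)} {F : Finset κ} (hC : DOn C F) (hD : DOn D F) :
    DOn (C ∩ D) F := fun x y hxy => by
  simp only [Set.mem_inter_iff, hC hxy, hD hxy]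

/-- The basic cylinder over `F` with pattern `z`. -/
def cylPat (F : Finset κ) (z : ∀ _ : F, Two) : Set (Cube κ) := {x | ∀ i : F, x i = z i}

lemma cylPat_closed (F : Finset κ) (z : ∀ _ : F, Two) : IsClosed (cylPat F z) := by
  have : cylPat F z = ⋂ i : F, (fun x : Cube κ => x i) ⁻¹' {z i} := by
    ext x; simp [cylPat]
  rw [this]
  exact isClosed_iInter fun i => (isClosed_singleton).preimage (continuous_apply _)

/-- Extension of a pattern by zero. -/
def extPat (F : Finset κ) (z : ∀ _ : F, Two) : Cube κ :=
  fun i => if h : i ∈ F then z ⟨i, h⟩ else 0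

lemma extPat_mem (F : Finset κ) (z : ∀ _ : F, Two) (i : F) : extPat F z i = z i := by
  simp [extPat]

lemma two_add_eq_zero_iff (a b : Two) : a + b = 0 ↔ b = a := by
  revert a b; decide

lemma lam_cylPat (F : Finset κ) (z : ∀ _ : F, Two) :
    lam κ (cylPat F z) = (2 : ℝ≥0∞)⁻¹ ^ F.card := by
  -- all patterns have the same measure, by translation invariance
  have hsame : ∀ z' : ∀ _ : F, Two, lam κ (cylPat F z') = lam κ (cylPat F (fun _ => 0)) := by
    intro z'
    have : cylPat F z' = (fun x => extPat F z' + x) ⁻¹' (cylPat F (fun _ => 0)) := by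
      ext x
      simp only [cylPat, Set.mem_preimage, Set.mem_setOf_eq]
      constructor
      · intro h i; show extPat F z' i + x i = 0
        rw [(two_add_eq_zero_iff _ _), h i, extPat_mem]
      · intro h i
        have := h i
        rw [show (extPat F z' + x) i = extPat F z' i + x i from rfl,
          two_add_eq_zero_iff, extPat_mem] at this
        exact this
    rw [this, measure_preimage_add]
  -- the patterns partition the cube
  have hdisj : Pairwise (Function.onFun Disjoint fun z' : ∀ _ : F, Two => cylPat F z') := by
    intro a b hab
    rw [Function.onFun, Set.disjoint_left]
    intro x hxa hxb
    apply hab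
    funext i
    rw [← hxa i, ← hxb i]
  have hcover : (⋃ z' : ∀ _ : F, Two, cylPat F z') = Set.univ := by
    ext x
    simp only [Set.mem_iUnion, Set.mem_univ, iff_true]
    exact ⟨fun i => x i, fun i => rfl⟩
  have hsum := measure_iUnion (μ := lam κ) hdisj
    (fun z' => (cylPat_closed F z').measurableSet)
  rw [hcover, measure_univ, tsum_fintype] at hsum
  have hcard : (Finset.univ.sum fun z' : ∀ _ : F, Two => lam κ (cylPat F z'))
      = (2 : ℝ≥0∞) ^ F.card * lam κ (cylPat F (fun _ => 0)) := by
    rw [Finset.sum_congr rfl (fun z' _ => hsame z'), Finset.sum_const, nsmul_eq_mul]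
    congr 1
    rw [Finset.card_univ, Fintype.card_fun, Fintype.card_coe]
    have : Fintype.card Two = 2 := rfl
    rw [this]
    push_cast
    rfl
  rw [hcard] at hsum
  rw [hsame z]
  have h2 : ((2 : ℝ≥0∞) ^ F.card) ≠ 0 := by positivity
  have h2' : ((2 : ℝ≥0∞) ^ F.card) ≠ ⊤ := by
    exact ENNReal.pow_ne_top (by norm_num)
  have := congrArg (fun t => ((2 : ℝ≥0∞) ^ F.card)⁻¹ * t) hsum.symm
  rw [← mul_assoc, ENNReal.inv_mul_cancel h2 h2', one_mul, mul_one] at this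
  rw [this, ← ENNReal.inv_pow]

end Stage2
section Stage3
variable {κ : Type u}
local instance : DecidableEq κ := Classical.decEq κ

/-- The set of patterns of a set depending only on `F`. -/
noncomputable def patSet (C : Set (Cube κ)) (F : Finset κ) : Finset (∀ _ : F, Two) :=
  letI := Classical.decPred (fun z : ∀ _ : F, Two => extPat F z ∈ C)
  Finset.univ.filter (fun z => extPat F z ∈ C)

lemma mem_patSet {C : Set (Cube κ)} {F : Finset κ} {z : ∀ _ : F, Two} :
    z ∈ patSet C F ↔ extPat F z ∈ C := by
  classical
  simp [patSet]

lemma DOn.eq_biUnion {C : Set (Cube κ)} {F : Finset κ} (h : DOn C F) :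
    C = ⋃ z ∈ patSet C F, cylPat F z := by
  ext x
  simp only [Set.mem_iUnion, mem_patSet]
  constructor
  · intro hx
    refine ⟨fun i => x i, ?_, fun i => rfl⟩
    rwa [h (y := x) (fun i hi => extPat_mem F _ ⟨i, hi⟩)]
  · rintro ⟨z, hz, hxz⟩
    have : ∀ i ∈ F, x i = extPat F z i := fun i hi => by
      rw [hxz ⟨i, hi⟩, extPat_mem F z ⟨i, hi⟩]
    rwa [h this]

lemma DOn.lam_eq {C : Set (Cube κ)} {F : Finset κ} (h : DOn C F) :
    lam κ C = (patSet C F).card * (2 : ℝ≥0∞)⁻¹ ^ F.card := by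
  conv_lhs => rw [h.eq_biUnion]
  rw [measure_biUnion_finset ?_ (fun z _ => (cylPat_closed F z).measurableSet)]
  · rw [Finset.sum_congr rfl (fun z _ => lam_cylPat F z), Finset.sum_const, nsmul_eq_mul]
  · intro a _ b hb hab
    dsimp only [Function.onFun]
    rw [Set.disjoint_left]
    intro x hxa hxb
    exact hab (funext fun i => by rw [← hxa i, ← hxb i])

/-- Independence of sets depending on disjoint finite coordinate sets. -/
lemma lam_inter_of_disjoint {C D : Set (Cube κ)} {F G : Finset κ}
    (hFG : Disjoint F G) (hC : DOn C F) (hD : DOn D G) :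
    lam κ (C ∩ D) = lam κ C * lam κ D := by
  have hCD : DOn (C ∩ D) (F ∪ G) :=
    (hC.mono Finset.subset_union_left).inter (hD.mono Finset.subset_union_right)
  rw [hCD.lam_eq, hC.lam_eq, hD.lam_eq]
  have hcardF : (F ∪ G).card = F.card + G.card := Finset.card_union_of_disjoint hFG
  have key : (patSet (C ∩ D) (F ∪ G)).card = (patSet C F).card * (patSet D G).card := by
    rw [← Finset.card_product]
    refine Finset.card_bij'
      (fun z _ => (fun i : F => z ⟨i, Finset.mem_union_left _ i.2⟩,
                   fun i : G => z ⟨i, Finset.mem_union_right _ i.2⟩))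
      (fun p _ => (fun i : (F ∪ G : Finset κ) =>
        if h : (i : κ) ∈ F then p.1 ⟨i, h⟩ else p.2 ⟨i, by
          rcases Finset.mem_union.1 i.2 with h' | h'
          · exact absurd h' h
          · exact h'⟩)) ?_ ?_ ?_ ?_
    · -- hi : forward membership
      intro z hz
      rw [mem_patSet] at hz
      obtain ⟨hz1, hz2⟩ := hz
      rw [Finset.mem_product, mem_patSet, mem_patSet]
      constructor
      · rwa [hC (y := extPat (F ∪ G) z) (fun i hi => by
          rw [extPat_mem F _ ⟨i, hi⟩, extPat_mem (F ∪ G) z ⟨i, Finset.mem_union_left _ hi⟩])]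
      · rwa [hD (y := extPat (F ∪ G) z) (fun i hi => by
          rw [extPat_mem G _ ⟨i, hi⟩, extPat_mem (F ∪ G) z ⟨i, Finset.mem_union_right _ hi⟩])]
    · -- hj : backward membership
      intro p hp
      rw [Finset.mem_product, mem_patSet, mem_patSet] at hp
      obtain ⟨hp1, hp2⟩ := hp
      rw [mem_patSet]
      constructor
      · rwa [hC (y := extPat F p.1) (fun i hi => by
          rw [extPat_mem (F ∪ G) _ ⟨i, Finset.mem_union_left _ hi⟩, extPat_mem F p.1 ⟨i, hi⟩]
          simp [hi])]
      · rwa [hD (y := extPat G p.2) (fun i hi => by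
          rw [extPat_mem (F ∪ G) _ ⟨i, Finset.mem_union_right _ hi⟩, extPat_mem G p.2 ⟨i, hi⟩]
          have : (i : κ) ∉ F := fun hiF => (Finset.disjoint_left.1 hFG hiF hi)
          simp [this])]
    · -- left inverse
      intro z _
      funext i
      rcases Finset.mem_union.1 i.2 with h' | h' <;> simp [h']
    · -- right inverse
      intro p _
      refine Prod.ext ?_ ?_
      · funext i; simp [i.2]
      · funext i
        have : (i : κ) ∉ F := fun hiF => (Finset.disjoint_left.1 hFG hiF i.2)
        simp [this]
  rw [key, hcardF, pow_add]
  push_cast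
  ring
end Stage3
section Stage4
variable {κ : Type u}
local instance : DecidableEq κ := Classical.decEq κ

lemma cylPat_open (F : Finset κ) (z : ∀ _ : F, Two) : IsOpen (cylPat F z) := by
  have : cylPat F z = ⋂ i : F, (fun x : Cube κ => (x : Cube κ) i) ⁻¹' {z i} := by
    ext x; simp [cylPat]
  rw [this]
  exact isOpen_iInter_of_finite fun i => (isOpen_discrete _).preimage (continuous_apply _)

lemma DOn_cylPat (F : Finset κ) (z : ∀ _ : F, Two) : DOn (cylPat F z) F := by
  intro x y hxy
  constructor <;> intro h i
  · rw [← h i, hxy i i.2]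
  · rw [← h i, hxy i i.2]

lemma DOn_biUnion {ι : Type*} (t : Finset ι) (f : ι → Set (Cube κ)) (F : Finset κ)
    (h : ∀ x ∈ t, DOn (f x) F) : DOn (⋃ x ∈ t, f x) F := by
  intro x y hxy
  simp only [Set.mem_iUnion]
  exact exists_congr fun z => exists_congr fun hz => h z hz hxy

/-- Approximation of measurable sets by finite-dimensional (clopen) sets. -/
lemma exists_approx (A : Set (Cube κ)) (hA : MeasurableSet A) {ε : ℝ≥0∞} (hε : ε ≠ 0) :
    ∃ (F : Finset κ) (C : Set (Cube κ)), DOn C F ∧ MeasurableSet C ∧ lam κ (A ∆ C) < ε := by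
  have hε2 : ε / 2 ≠ 0 := by
    simp [ENNReal.div_eq_zero_iff, hε]
  obtain ⟨U, hAU, hUo, hUA⟩ := hA.exists_isOpen_diff_lt (measure_ne_top (lam κ) A) hε2
  obtain ⟨K, hKU, hKc, hUK⟩ :=
    hUo.measurableSet.exists_isCompact_diff_lt (measure_ne_top (lam κ) U) hε2
  -- for every x in U, choose a basic cylinder around x inside U
  have hbasis : ∀ x ∈ U, ∃ I : Finset κ, cylPat I (fun i => x i) ⊆ U := by
    intro x hx
    obtain ⟨I, u, hu, hIu⟩ := (isOpen_pi_iff.1 hUo) x hx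
    refine ⟨I, fun y hy => hIu ?_⟩
    intro i hi
    have := hy ⟨i, hi⟩
    simp only at this
    rw [this]
    exact (hu i hi).2
  choose! I hI using hbasis
  -- compactness: finitely many cylinders cover K
  have hcover : K ⊆ ⋃ u : U, cylPat (I u) (fun i => (u : Cube κ) i) := by
    intro x hx
    exact Set.mem_iUnion.2 ⟨⟨x, hKU hx⟩, fun i => rfl⟩
  obtain ⟨t, ht⟩ := hKc.elim_finite_subcover
    (fun u : U => cylPat (I u) (fun i => (u : Cube κ) i))
    (fun u => cylPat_open _ _) hcover
  set C : Set (Cube κ) := ⋃ u ∈ t, cylPat (I u) (fun i => (u : Cube κ) i) with hCdef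
  set F : Finset κ := t.sup (fun u => I u) with hFdef
  have hDOn : DOn C F := by
    refine DOn_biUnion t _ F fun u hu => ?_
    exact (DOn_cylPat _ _).mono (Finset.le_sup (f := fun u : U => I (u : Cube κ)) hu)
  have hCopen : IsOpen C := isOpen_biUnion fun u _ => cylPat_open _ _
  have hCU : C ⊆ U := Set.iUnion₂_subset fun u _ => hI u u.2
  have hKC : K ⊆ C := ht
  refine ⟨F, C, hDOn, hCopen.measurableSet, ?_⟩
  have hsub : A ∆ C ⊆ (U \ A) ∪ (U \ K) := by
    rintro x hx
    rcases hx with ⟨hxA, hxC⟩ | ⟨hxC, hxA⟩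
    · exact Or.inr ⟨hAU hxA, fun hxK => hxC (hKC hxK)⟩
    · exact Or.inl ⟨hCU hxC, hxA⟩
  calc lam κ (A ∆ C) ≤ lam κ ((U \ A) ∪ (U \ K)) := measure_mono hsub
    _ ≤ lam κ (U \ A) + lam κ (U \ K) := measure_union_le _ _
    _ < ε / 2 + ε / 2 := ENNReal.add_lt_add hUA.2 hUK
    _ = ε := ENNReal.add_halves ε

end Stage4
section Stage5
variable {κ : Type u}
local instance : DecidableEq κ := Classical.decEq κ

/-- Iterates of the coordinate-permutation map. -/
lemma cubeMap_iterate (σ : κ ≃ κ) (n : ℕ) (x : Cube κ) :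
    (⇑(cubeMap κ σ))^[n] x = x ∘ (⇑σ)^[n] := by
  induction n generalizing x with
  | zero => rfl
  | succ n ih =>
    rw [Function.iterate_succ_apply, Function.iterate_succ']
    show (⇑(cubeMap κ σ))^[n] (cubeMap κ σ x) = x ∘ (σ ∘ (⇑σ)^[n])
    rw [ih (cubeMap κ σ x)]
    rfl

lemma DOn_preimage (σ : κ ≃ κ) (n : ℕ) {C : Set (Cube κ)} {F : Finset κ} (h : DOn C F) :
    DOn ((⇑(cubeMap κ σ))^[n] ⁻¹' C) (F.image (⇑σ)^[n]) := by
  intro x y hxy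
  simp only [Set.mem_preimage, cubeMap_iterate]
  refine h fun i hi => ?_
  exact hxy ((⇑σ)^[n] i) (Finset.mem_image_of_mem _ hi)

/-- The key "mixing" lemma: if some power of `σ` moves any finite set off itself, then the
induced transformation meets any two positive-measure sets. -/
lemma ergodic_key (σ : κ ≃ κ)
    (hsep : ∀ H : Finset κ, ∃ n : ℕ, ∀ i ∈ H, (⇑σ)^[n] i ∉ H)
    (A B : Set (Cube κ)) (hA : MeasurableSet A) (hB : MeasurableSet B)
    (hA0 : lam κ A ≠ 0) (hB0 : lam κ B ≠ 0) :
    ∃ n : ℕ, lam κ ((⇑(cubeMap κ σ))^[n] ⁻¹' A ∩ B) ≠ 0 := by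
  set μ := lam κ
  set a := μ A with ha
  set b := μ B with hb
  have hab : a * b ≠ 0 := mul_ne_zero hA0 hB0
  have habt : a * b ≠ ⊤ := ENNReal.mul_ne_top (measure_ne_top _ _) (measure_ne_top _ _)
  set ε : ℝ≥0∞ := a * b / 8 with hεdef
  have hε : ε ≠ 0 := by
    rw [hεdef]
    simp [ENNReal.div_eq_zero_iff, hab]
  have hε1 : ε ≤ 1 := by
    rw [hεdef]
    calc a * b / 8 ≤ 1 * 1 / 8 := by
          gcongr <;> exact prob_le_one
      _ ≤ 1 := by norm_num
  obtain ⟨F, C, hCD, hCm, hAC⟩ := exists_approx A hA hε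
  obtain ⟨G, D, hDD, hDm, hBD⟩ := exists_approx B hB hε
  obtain ⟨n, hn⟩ := hsep (F ∪ G)
  refine ⟨n, fun h0 => ?_⟩
  set Tn := (⇑(cubeMap κ σ))^[n] with hTn
  have hTnmp : MeasurePreserving Tn μ μ := (cubeMap_measurePreserving κ σ).iterate n
  -- independence
  have hdis : Disjoint (F.image (⇑σ)^[n]) G := by
    rw [Finset.disjoint_left]
    rintro j hj hjG
    obtain ⟨i, hi, rfl⟩ := Finset.mem_image.1 hj
    exact hn i (Finset.mem_union_left _ hi) (Finset.mem_union_right _ hjG)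
  have hind : μ (Tn ⁻¹' C ∩ D) = μ C * μ D := by
    rw [lam_inter_of_disjoint hdis (DOn_preimage σ n hCD) hDD,
      hTnmp.measure_preimage hCm.nullMeasurableSet]
  -- inclusion
  have hsub : Tn ⁻¹' C ∩ D ⊆ (Tn ⁻¹' A ∩ B) ∪ (Tn ⁻¹' (A ∆ C) ∪ (B ∆ D)) := by
    rintro x ⟨hxC, hxD⟩
    by_cases hxA : Tn x ∈ A
    · by_cases hxB : x ∈ B
      · exact Or.inl ⟨hxA, hxB⟩
      · exact Or.inr (Or.inr (Or.inr ⟨hxD, hxB⟩))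
    · exact Or.inr (Or.inl (Or.inr ⟨hxC, hxA⟩))
  have hbound : μ C * μ D ≤ 2 * ε := by
    calc μ C * μ D = μ (Tn ⁻¹' C ∩ D) := hind.symm
      _ ≤ μ (Tn ⁻¹' A ∩ B) + (μ (Tn ⁻¹' (A ∆ C)) + μ (B ∆ D)) :=
          le_trans (measure_mono hsub) (le_trans (measure_union_le _ _)
            (by gcongr; exact measure_union_le _ _))
      _ = 0 + (μ (A ∆ C) + μ (B ∆ D)) := by
          rw [h0, hTnmp.measure_preimage (hA.symmDiff hCm).nullMeasurableSet]
      _ ≤ 0 + (ε + ε) := add_le_add le_rfl (add_le_add hAC.le hBD.le)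
      _ = 2 * ε := by ring
  -- lower bound on μ C * μ D
  have haC : a ≤ μ C + ε := by
    calc a = μ A := ha
      _ ≤ μ (C ∪ A ∆ C) := measure_mono (fun x hx => by
          by_cases hxC : x ∈ C
          · exact Or.inl hxC
          · exact Or.inr (Or.inl ⟨hx, hxC⟩))
      _ ≤ μ C + μ (A ∆ C) := measure_union_le _ _
      _ ≤ μ C + ε := add_le_add le_rfl hAC.le
  have hbD : b ≤ μ D + ε := by
    calc b = μ B := hb
      _ ≤ μ (D ∪ B ∆ D) := measure_mono (fun x hx => by
          by_cases hxD : x ∈ D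
          · exact Or.inl hxD
          · exact Or.inr (Or.inl ⟨hx, hxD⟩))
      _ ≤ μ D + μ (B ∆ D) := measure_union_le _ _
      _ ≤ μ D + ε := add_le_add le_rfl hBD.le
  have hfinal : a * b ≤ 5 * ε := by
    calc a * b ≤ (μ C + ε) * (μ D + ε) := mul_le_mul' haC hbD
      _ = μ C * μ D + (ε * μ D + (μ C * ε + ε * ε)) := by ring
      _ ≤ 2 * ε + (ε * 1 + (1 * ε + ε * 1)) :=
          add_le_add hbound (add_le_add (mul_le_mul' le_rfl prob_le_one)
            (add_le_add (mul_le_mul' prob_le_one le_rfl) (mul_le_mul' le_rfl hε1)))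
      _ = 5 * ε := by ring
  -- contradiction: a * b ≤ 5 * (a*b) / 8 < a * b
  have : a * b < a * b := by
    calc a * b ≤ 5 * ε := hfinal
      _ = (5 / 8) * (a * b) := by
          rw [hεdef, ENNReal.div_eq_inv_mul, ENNReal.div_eq_inv_mul]
          ring
      _ < 1 * (a * b) := by
          refine ENNReal.mul_lt_mul_left hab habt ?_
          rw [ENNReal.div_lt_iff (by norm_num) (by norm_num)]
          norm_num
      _ = a * b := one_mul _
  exact absurd this (lt_irrefl _)
end Stage5
section Stage6
variable {κ : Type u}

/-- For infinite `κ` there is a permutation whose powers move any finite set off itself. -/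
lemma exists_shift (κ : Type u) [Infinite κ] :
    ∃ σ : κ ≃ κ, ∀ H : Finset κ, ∃ n : ℕ, ∀ i ∈ H, (⇑σ)^[n] i ∉ H := by
  -- get an equivalence κ ≃ ℤ × κ
  have hcard : Cardinal.mk (ℤ × κ) = Cardinal.mk κ := by
    rw [Cardinal.mk_prod]
    rw [Cardinal.mk_int, Cardinal.lift_aleph0, Cardinal.lift_id']
    exact Cardinal.mul_eq_right (Cardinal.aleph0_le_mk κ) (Cardinal.aleph0_le_mk κ)
      (by simp [Cardinal.aleph0_ne_zero])
  obtain ⟨e⟩ := Cardinal.eq.1 hcard.symm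
  set sh : ℤ × κ ≃ ℤ × κ := (Equiv.addRight (1 : ℤ)).prodCongr (Equiv.refl κ) with hsh
  set σ : κ ≃ κ := e.trans (sh.trans e.symm) with hσ
  have hiter : ∀ (n : ℕ) (i : κ), e ((⇑σ)^[n] i) = ((e i).1 + n, (e i).2) := by
    intro n
    induction n with
    | zero => intro i; simp
    | succ n ih =>
      intro i
      rw [Function.iterate_succ_apply', hσ]
      show e (e.symm (sh (e ((⇑σ)^[n] i)))) = _
      rw [Equiv.apply_symm_apply, ih i, hsh]
      show ((e i).1 + n + 1, (e i).2) = ((e i).1 + (n + 1 : ℕ), (e i).2)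
      push_cast
      rw [add_assoc]
  refine ⟨σ, fun H => ?_⟩
  rcases H.eq_empty_or_nonempty with rfl | hne
  · exact ⟨0, by simp⟩
  set D : Finset ℤ := H.image (fun i => (e i).1) with hD
  have hDne : D.Nonempty := hne.image _
  set M := D.max' hDne
  set m := D.min' hDne
  refine ⟨(M - m).toNat + 1, fun i hi hmem => ?_⟩
  have h1 : (e ((⇑σ)^[(M - m).toNat + 1] i)).1 ∈ D :=
    Finset.mem_image_of_mem _ hmem
  have h2 : (e i).1 ∈ D := Finset.mem_image_of_mem _ hi
  rw [hiter] at h1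
  have hle : (e i).1 + ((M - m).toNat + 1 : ℕ) ≤ M := D.le_max' _ h1
  have hge : m ≤ (e i).1 := D.min'_le _ h2
  have htoNat : (M - m : ℤ) ≤ ((M - m).toNat : ℤ) := Int.self_le_toNat _
  push_cast at hle
  omega
end Stage6
section Stage7
variable {X : Type u} [MeasurableSpace X]

/-- The preimage map on measurable sets induced by a measurable equivalence. -/
def preHom (T : X ≃ᵐ X) : BoundedLatticeHom (MSet X) (MSet X) where
  toFun s := ⟨T ⁻¹' s.1, T.measurable s.2⟩
  map_sup' s t := by apply Subtype.ext; show T ⁻¹' (s ⊔ t).1 = _; simp [Set.preimage_union]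
  map_inf' s t := by apply Subtype.ext; show T ⁻¹' (s ⊓ t).1 = _; simp [Set.preimage_inter]
  map_top' := by apply Subtype.ext; show T ⁻¹' (⊤ : MSet X).1 = _; simp
  map_bot' := by apply Subtype.ext; show T ⁻¹' (⊥ : MSet X).1 = _; simp

lemma preHom_coe (T : X ≃ᵐ X) (s : MSet X) : (preHom T s).1 = T ⁻¹' s.1 := rfl

lemma preHom_symm_apply (T : X ≃ᵐ X) (s : MSet X) :
    preHom T.symm (preHom T s) = s := by
  apply Subtype.ext
  show T.symm ⁻¹' (T ⁻¹' s.1) = s.1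
  ext x; simp

lemma preHom_apply_symm (T : X ≃ᵐ X) (s : MSet X) :
    preHom T (preHom T.symm s) = s := by
  apply Subtype.ext
  show T ⁻¹' (T.symm ⁻¹' s.1) = s.1
  ext x; simp

/-- The ring equivalence on the Boolean ring of measurable sets induced by a
measurable equivalence. -/
def preRingEquiv (T : X ≃ᵐ X) : AsBoolRing (MSet X) ≃+* AsBoolRing (MSet X) :=
  RingEquiv.ofRingHom (preHom T).asBoolRing (preHom T.symm).asBoolRing
    (by
      ext a
      show toBoolRing (preHom T (preHom T.symm (ofBoolRing a))) = a
      rw [preHom_apply_symm, toBoolRing_ofBoolRing])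
    (by
      ext a
      show toBoolRing (preHom T.symm (preHom T (ofBoolRing a))) = a
      rw [preHom_symm_apply, toBoolRing_ofBoolRing])

lemma preRingEquiv_apply (T : X ≃ᵐ X) (a : AsBoolRing (MSet X)) :
    preRingEquiv T a = toBoolRing (preHom T (ofBoolRing a)) := rfl

lemma mem_nullIdeal_iff {μ : Measure X} {a : AsBoolRing (MSet X)} :
    a ∈ nullIdeal μ ↔ μ (ofBoolRing a : MSet X).1 = 0 := Iff.rfl

lemma nullIdeal_map (T : X ≃ᵐ X) {μ : Measure X} (hT : MeasurePreserving T μ μ) :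
    nullIdeal μ = (nullIdeal μ).map (preRingEquiv T : AsBoolRing (MSet X) →+* AsBoolRing (MSet X)) := by
  apply le_antisymm
  · intro a ha
    rw [mem_nullIdeal_iff] at ha
    have hb : toBoolRing (preHom T.symm (ofBoolRing a)) ∈ nullIdeal μ := by
      rw [mem_nullIdeal_iff, ofBoolRing_toBoolRing, preHom_coe,
        (hT.symm T).measure_preimage (ofBoolRing a : MSet X).2.nullMeasurableSet]
      exact ha
    have := Ideal.mem_map_of_mem
      (preRingEquiv T : AsBoolRing (MSet X) →+* AsBoolRing (MSet X)) hb
    have heq : preRingEquiv T (toBoolRing (preHom T.symm (ofBoolRing a))) = a := by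
      rw [preRingEquiv_apply, ofBoolRing_toBoolRing, preHom_apply_symm, toBoolRing_ofBoolRing]
    exact heq ▸ this
  · rw [Ideal.map_le_iff_le_comap]
    intro a ha
    rw [mem_nullIdeal_iff] at ha
    rw [Ideal.mem_comap, mem_nullIdeal_iff]
    show μ (ofBoolRing (preRingEquiv T a) : MSet X).1 = 0
    rw [preRingEquiv_apply, ofBoolRing_toBoolRing,
      preHom_coe, hT.measure_preimage (ofBoolRing a : MSet X).2.nullMeasurableSet]
    exact ha

/-- The ring equivalence on the measure algebra induced by a measure-preserving
measurable equivalence. -/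
def quotEquiv (T : X ≃ᵐ X) {μ : Measure X} (hT : MeasurePreserving T μ μ) :
    (AsBoolRing (MSet X) ⧸ nullIdeal μ) ≃+* (AsBoolRing (MSet X) ⧸ nullIdeal μ) :=
  Ideal.quotientEquiv (nullIdeal μ) (nullIdeal μ) (preRingEquiv T) (nullIdeal_map T hT)

/-- The automorphism of the measure algebra induced by a measure-preserving
measurable equivalence. -/
def autMAlg (T : X ≃ᵐ X) {μ : Measure X} (hT : MeasurePreserving T μ μ) :
    MAlg X μ ≃o MAlg X μ where
  toFun a := toBoolAlg (quotEquiv T hT (ofBoolAlg a))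
  invFun a := toBoolAlg ((quotEquiv T hT).symm (ofBoolAlg a))
  left_inv a := by simp
  right_inv a := by simp
  map_rel_iff' {a b} := by
    rw [← ofBoolAlg_mul_ofBoolAlg_eq_left_iff (a := a) (b := b)]
    rw [← ofBoolAlg_mul_ofBoolAlg_eq_left_iff]
    simp only [Equiv.coe_fn_mk, ofBoolAlg_toBoolAlg]
    rw [← map_mul]
    exact ⟨fun h => (quotEquiv T hT).injective h, fun h => congrArg _ h⟩

lemma autMAlg_mk (T : X ≃ᵐ X) {μ : Measure X} (hT : MeasurePreserving T μ μ) (s : MSet X) :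
    autMAlg T hT (MAlg.mk μ s) = MAlg.mk μ (preHom T s) := by
  have h : quotEquiv T hT (Ideal.Quotient.mk (nullIdeal μ) (toBoolRing s)) =
      Ideal.Quotient.mk (nullIdeal μ) (toBoolRing (preHom T s)) := by
    unfold quotEquiv
    rw [Ideal.quotientEquiv_mk, preRingEquiv_apply, ofBoolRing_toBoolRing]
  show toBoolAlg (quotEquiv T hT (ofBoolAlg (toBoolAlg
    (Ideal.Quotient.mk (nullIdeal μ) (toBoolRing s))))) = _
  rw [ofBoolAlg_toBoolAlg, h]
  rfl

lemma MAlg.mk_surjective {μ : Measure X} (a : MAlg X μ) : ∃ s : MSet X, MAlg.mk μ s = a := by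
  obtain ⟨r, hr⟩ := Ideal.Quotient.mk_surjective (ofBoolAlg a)
  refine ⟨ofBoolRing r, ?_⟩
  rw [MAlg.mk, toBoolRing_ofBoolRing, hr, toBoolAlg_ofBoolAlg]

lemma MAlg.mk_eq_bot_iff {μ : Measure X} {s : MSet X} :
    MAlg.mk μ s = ⊥ ↔ μ s.1 = 0 := by
  rw [MAlg.mk, show (⊥ : MAlg X μ) = toBoolAlg 0 from rfl, toBoolAlg_inj,
    Ideal.Quotient.eq_zero_iff_mem, mem_nullIdeal_iff, ofBoolRing_toBoolRing]

lemma MAlg.mk_inf {μ : Measure X} (s t : MSet X) :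
    MAlg.mk μ s ⊓ MAlg.mk μ t = MAlg.mk μ (s ⊓ t) := by
  rw [MAlg.mk, MAlg.mk, MAlg.mk, toBoolRing_inf, map_mul, toBoolAlg_mul]

lemma mval_mk {μ : Measure X} (s : MSet X) : mval μ (MAlg.mk μ s) = (μ s.1).toReal := rfl

end Stage7
/-- For every infinite `κ` there is a measure-preserving Boolean automorphism `φ` of the
measure algebra `M_κ` which is "ergodic": any two nonzero elements meet after applying
some power of `φ` to the first one. -/
theorem exists_ergodic_measure_preserving_automorphism (κ : Type u) [Infinite κ] :
    ∃ φ : MAlg (Cube κ) (lam κ) ≃o MAlg (Cube κ) (lam κ),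
      (∀ a : MAlg (Cube κ) (lam κ), mval (lam κ) (φ a) = mval (lam κ) a) ∧
      ∀ a b : MAlg (Cube κ) (lam κ), a ≠ ⊥ → b ≠ ⊥ →
        ∃ n : ℕ, (fun x => φ x)^[n] a ⊓ b ≠ ⊥ := by
  obtain ⟨σ, hsep⟩ := exists_shift κ
  set T : Cube κ ≃ᵐ Cube κ := (cubeMap κ σ).toMeasurableEquiv with hTdef
  have hT : MeasurePreserving T (lam κ) (lam κ) := cubeMap_measurePreserving κ σ
  set φ := autMAlg T hT with hφdef
  have hiter : ∀ (m : ℕ) (u : MSet (Cube κ)),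
      (fun x => φ x)^[m] (MAlg.mk (lam κ) u)
        = MAlg.mk (lam κ) ⟨(⇑(cubeMap κ σ))^[m] ⁻¹' u.1,
            ((cubeMap_measurePreserving κ σ).iterate m).measurable u.2⟩ := by
    intro m
    induction m with
    | zero =>
      intro u
      simp only [Function.iterate_zero, id_eq]
      congr 1
    | succ m ih =>
      intro u
      rw [Function.iterate_succ_apply]
      show (fun x => φ x)^[m] (φ (MAlg.mk (lam κ) u)) = _
      rw [hφdef, autMAlg_mk, ih]
      congr 1
      apply Subtype.ext
      show (⇑(cubeMap κ σ))^[m] ⁻¹' (preHom T u).1 = (⇑(cubeMap κ σ))^[m + 1] ⁻¹' u.1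
      rw [preHom_coe]
      ext x
      simp only [Set.mem_preimage, Function.iterate_succ_apply']
      rfl
  refine ⟨φ, ?_, ?_⟩
  · intro a
    obtain ⟨s, rfl⟩ := MAlg.mk_surjective a
    rw [hφdef, autMAlg_mk, mval_mk, mval_mk, preHom_coe,
      hT.measure_preimage s.2.nullMeasurableSet]
  · intro a b ha hb
    obtain ⟨s, rfl⟩ := MAlg.mk_surjective a
    obtain ⟨t, rfl⟩ := MAlg.mk_surjective b
    have hs0 : lam κ s.1 ≠ 0 := fun h => ha (MAlg.mk_eq_bot_iff.2 h)
    have ht0 : lam κ t.1 ≠ 0 := fun h => hb (MAlg.mk_eq_bot_iff.2 h)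
    obtain ⟨n, hn⟩ := ergodic_key σ hsep s.1 t.1 s.2 t.2 hs0 ht0
    refine ⟨n, ?_⟩
    rw [hiter n s, MAlg.mk_inf, Ne, MAlg.mk_eq_bot_iff]
    convert hn using 2
    rfl
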